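/- arXiv:2307.01788 — 2 statements merged into one kernel-verified Lean document; each statement's English description precedes it below -/
import Mathlib

section
/- Every bounded valuation ν on a Pervin space (X, L) extends to a unique valuation on (X, A(L)), where A(L) is the smallest algebra of subsets containing L. -/
open scoped ENNReal NNReal

variable {X : Type*}

/-- A lattice of subsets of `X`. -/
def IsLatt (L : Set (Set X)) : Prop :=
  ∅ ∈ L ∧ Set.univ ∈ L ∧ (∀ U ∈ L, ∀ V ∈ L, U ∪ V ∈ L) ∧ (∀ U ∈ L, ∀ V ∈ L, U ∩ V ∈ L)

/-- An ω-topology: a lattice of subsets closed under countable unions. -/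
def IsOmegaTop (L : Set (Set X)) : Prop :=
  IsLatt L ∧ ∀ U : ℕ → Set X, (∀ n, U n ∈ L) → (⋃ n, U n) ∈ L

/-- A valuation on `(X, L)`: strict, monotonic, modular. -/
def IsVal (L : Set (Set X)) (ν : Set X → ℝ≥0∞) : Prop :=
  ν ∅ = 0 ∧ (∀ U ∈ L, ∀ V ∈ L, U ⊆ V → ν U ≤ ν V) ∧
    (∀ U ∈ L, ∀ V ∈ L, ν U + ν V = ν (U ∪ V) + ν (U ∩ V))

/-- ω-continuity of a valuation: it preserves suprema of monotone sequences of sets. -/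
def IsOmegaContVal (L : Set (Set X)) (ν : Set X → ℝ≥0∞) : Prop :=
  ∀ U : ℕ → Set X, (∀ n, U n ∈ L) → Monotone U → ν (⋃ n, U n) = ⨆ n, ν (U n)

/-- `𝓛(X, L)`: maps `h : X → ℝ≥0∞` with `h⁻¹((t,∞]) ∈ L` for all `t ≥ 0`. -/
def MemL (L : Set (Set X)) (h : X → ℝ≥0∞) : Prop :=
  ∀ t : ℝ≥0, {x | (t : ℝ≥0∞) < h x} ∈ L

/-- The improper Riemann integral `∫₀^∞ f(t) dt` of an antitonic map `f : ℝ≥0 → ℝ≥0∞`,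
realized as a Lebesgue integral over `(0, ∞)`. -/
noncomputable def riem (f : ℝ≥0 → ℝ≥0∞) : ℝ≥0∞ :=
  ∫⁻ t in Set.Ioi (0 : ℝ), f t.toNNReal

/-- The Choquet integral `∫ h dν = ∫₀^∞ ν(h⁻¹((t,∞])) dt`. -/
noncomputable def choquet (ν : Set X → ℝ≥0∞) (h : X → ℝ≥0∞) : ℝ≥0∞ :=
  riem fun t => ν {x | (t : ℝ≥0∞) < h x}

/-- The characteristic map of `U`. -/
noncomputable def chi (U : Set X) : X → ℝ≥0∞ :=
  U.indicator fun _ => 1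

/-- `(g·μ)(U) := ∫ χ_U·g dμ`. -/
noncomputable def densMul (g : X → ℝ≥0∞) (μ : Set X → ℝ≥0∞) (U : Set X) : ℝ≥0∞ :=
  choquet μ fun x => chi U x * g x

/-- `(g·μ)(C) = ∫₀^∞ μ(C ∩ g⁻¹((t,∞])) dt`, the explicit formula for the density valuation. -/
noncomputable def densF (g : X → ℝ≥0∞) (μ : Set X → ℝ≥0∞) (C : Set X) : ℝ≥0∞ :=
  riem fun t => μ (C ∩ {x | (t : ℝ≥0∞) < g x})

/-- The smallest algebra of subsets of `X` containing `L`. -/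
def genAlg (L : Set (Set X)) : Set (Set X) :=
  {C | ∀ A : Set (Set X),
    (L ⊆ A ∧ ∅ ∈ A ∧ (∀ S ∈ A, Sᶜ ∈ A) ∧ (∀ S ∈ A, ∀ T ∈ A, S ∪ T ∈ A)) → C ∈ A}

/-- A crescent: a difference of two elements of `L`. -/
def IsCrescent (L : Set (Set X)) (C : Set X) : Prop :=
  ∃ U ∈ L, ∃ V ∈ L, C = U \ V

/-- A signed valuation: strict and modular, real-valued. -/
def IsSignedVal (L : Set (Set X)) (ς : Set X → ℝ) : Prop :=
  ς ∅ = 0 ∧ ∀ U ∈ L, ∀ V ∈ L, ς (U ∪ V) + ς (U ∩ V) = ς U + ς V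

/-- The Hahn decomposition property of a signed valuation `ς` on `(X, L)`: stated via any
signed valuation extending `ς` to the generated algebra (such an extension is unique). -/
def HasHahn (L : Set (Set X)) (ς : Set X → ℝ) : Prop :=
  ∀ ς' : Set X → ℝ, IsSignedVal (genAlg L) ς' → (∀ U ∈ L, ς' U = ς U) →
    ∃ U ∈ L, (∀ C, IsCrescent L C → C ⊆ U → 0 ≤ ς' C) ∧
      (∀ C, IsCrescent L C → Disjoint C U → ς' C ≤ 0)


section SHTaux
open scoped Classical
namespace SHT

variable {L : Set (Set X)} {ν : Set X → ℝ≥0∞}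

/-- intersection of a finite family (`univ` if empty) -/
def itr (S : Finset (Set X)) : Set X := ⋂₀ ↑S

/-- union of a finite family (`∅` if empty) -/
def unn (S : Finset (Set X)) : Set X := ⋃₀ ↑S

/-- the atom of the family `F` determined by the subfamily `S` -/
def atom (F S : Finset (Set X)) : Set X := itr S \ unn (F \ S)

/-- the mass assigned to the atom of `S` in `F` -/
noncomputable def mval (ν : Set X → ℝ≥0∞) (F S : Finset (Set X)) : ℝ≥0∞ :=
  ν (itr S) - ν (itr S ∩ unn (F \ S))

/-- `C` is a union of atoms of `F` -/
def Carved (F : Finset (Set X)) (C : Set X) : Prop :=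
  ∀ x y : X, (∀ U ∈ F, (x ∈ U ↔ y ∈ U)) → (x ∈ C ↔ y ∈ C)

noncomputable def vsum (ν : Set X → ℝ≥0∞) (F : Finset (Set X)) (C : Set X) : ℝ≥0∞ :=
  ∑ S ∈ F.powerset, if atom F S ⊆ C then mval ν F S else 0

lemma itr_empty : itr (∅ : Finset (Set X)) = Set.univ := by simp [itr]

lemma itr_insert (a : Set X) (S : Finset (Set X)) : itr (insert a S) = a ∩ itr S := by
  simp [itr, Set.sInter_insert]

lemma unn_insert (a : Set X) (S : Finset (Set X)) : unn (insert a S) = a ∪ unn S := by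
  simp [unn, Set.sUnion_insert]

lemma itr_mem (hL : IsLatt L) {S : Finset (Set X)} (hS : ↑S ⊆ L) : itr S ∈ L := by
  classical
  induction S using Finset.induction_on with
  | empty => simpa [itr_empty] using hL.2.1
  | @insert a S ha ih =>
    rw [itr_insert]
    have h1 : a ∈ L := hS (by simp)
    have h2 : ↑S ⊆ L := fun U hU => hS (by simp [hU])
    exact hL.2.2.2 a h1 _ (ih h2)

lemma unn_mem (hL : IsLatt L) {S : Finset (Set X)} (hS : ↑S ⊆ L) : unn S ∈ L := by
  classical
  induction S using Finset.induction_on with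
  | empty => simpa [unn] using hL.1
  | @insert a S ha ih =>
    rw [unn_insert]
    have h1 : a ∈ L := hS (by simp)
    have h2 : ↑S ⊆ L := fun U hU => hS (by simp [hU])
    exact hL.2.2.1 a h1 _ (ih h2)

lemma val_ne_top (hL : IsLatt L) (hν : IsVal L ν) (hb : ν Set.univ < ⊤) {U : Set X}
    (hU : U ∈ L) : ν U ≠ ⊤ :=
  (lt_of_le_of_lt (hν.2.1 U hU _ hL.2.1 (Set.subset_univ U)) hb).ne

lemma mem_atom_iff {F S : Finset (Set X)} (hS : S ⊆ F) {x : X} :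
    x ∈ atom F S ↔ ∀ U ∈ F, (x ∈ U ↔ U ∈ S) := by
  constructor
  · rintro ⟨h1, h2⟩ U hU
    constructor
    · intro hx
      by_contra hUS
      exact h2 ⟨U, by simpa [Finset.mem_sdiff] using ⟨hU, hUS⟩, hx⟩
    · intro hUS
      exact h1 U (by simpa using hUS)
  · intro h
    constructor
    · intro U hU
      simp only [Finset.mem_coe] at hU
      exact (h U (hS hU)).2 hU
    · rintro ⟨U, hU, hx⟩
      simp only [Finset.mem_coe, Finset.mem_sdiff] at hU
      exact hU.2 ((h U hU.1).1 hx)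

lemma atom_eq_of_mem {F S T : Finset (Set X)} (hS : S ⊆ F) (hT : T ⊆ F) {x : X}
    (hxS : x ∈ atom F S) (hxT : x ∈ atom F T) : S = T := by
  ext U
  by_cases hU : U ∈ F
  · rw [← (mem_atom_iff hS).1 hxS U hU, ← (mem_atom_iff hT).1 hxT U hU]
  · constructor <;> intro h <;> [exact absurd (hS h) hU; exact absurd (hT h) hU]

lemma mval_of_empty {F S : Finset (Set X)} (h : atom F S = ∅) : mval ν F S = 0 := by
  have hsub : itr S ⊆ unn (F \ S) := by
    rw [← Set.diff_eq_empty]; exact h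
  rw [mval, Set.inter_eq_self_of_subset_left hsub, tsub_self]

lemma Carved.mono {F F' : Finset (Set X)} {C : Set X} (h : Carved F C) (hFF : F ⊆ F') :
    Carved F' C := fun x y hxy => h x y fun U hU => hxy U (hFF hU)

lemma carved_singleton (U : Set X) : Carved {U} U := fun _ _ h => h U (by simp)

lemma carved_empty : Carved (∅ : Finset (Set X)) (∅ : Set X) := fun _ _ _ => Iff.rfl

lemma Carved.compl {F : Finset (Set X)} {C : Set X} (h : Carved F C) : Carved F Cᶜ :=
  fun x y hxy => by simp [Set.mem_compl_iff, h x y hxy]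

lemma Carved.union {F : Finset (Set X)} {C D : Set X} (hC : Carved F C) (hD : Carved F D) :
    Carved F (C ∪ D) := fun x y hxy => by
  simp [Set.mem_union, hC x y hxy, hD x y hxy]

lemma Carved.inter {F : Finset (Set X)} {C D : Set X} (hC : Carved F C) (hD : Carved F D) :
    Carved F (C ∩ D) := fun x y hxy => by
  simp [Set.mem_inter_iff, hC x y hxy, hD x y hxy]

lemma atom_subset_or {F S : Finset (Set X)} {C : Set X} (hC : Carved F C) (hS : S ⊆ F) :
    atom F S ⊆ C ∨ ∀ x ∈ atom F S, x ∉ C := by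
  by_cases h : atom F S ⊆ C
  · exact Or.inl h
  · right
    obtain ⟨x₀, hx₀, hx₀C⟩ := Set.not_subset.1 h
    intro x hx hxC
    exact hx₀C ((hC x x₀ (fun U hU => by
      rw [(mem_atom_iff hS).1 hx U hU, (mem_atom_iff hS).1 hx₀ U hU])).1 hxC)

lemma exists_atom {F : Finset (Set X)} {C : Set X} (hC : Carved F C) {x : X} (hx : x ∈ C) :
    ∃ S, S ⊆ F ∧ x ∈ atom F S ∧ atom F S ⊆ C := by
  classical
  refine ⟨F.filter (fun U => x ∈ U), Finset.filter_subset _ _, ?_, ?_⟩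
  · rw [mem_atom_iff (Finset.filter_subset _ _)]
    intro U hU
    simp [Finset.mem_filter, hU]
  · intro y hy
    have hprof := (mem_atom_iff (Finset.filter_subset _ _)).1 hy
    refine (hC y x (fun U hU => ?_)).2 hx
    rw [hprof U hU, Finset.mem_filter]
    simp [hU]


-- atoms of the enlarged family
lemma atom_insert_not_mem {G S : Finset (Set X)} {a : Set X} (haG : a ∉ G) (haS : a ∉ S) :
    atom (insert a G) S = atom G S \ a := by
  classical
  rw [atom, Finset.insert_sdiff_of_notMem _ haS, unn_insert, atom,
    Set.union_comm, ← Set.diff_diff, Set.diff_diff, Set.union_comm, ← Set.diff_diff]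

lemma atom_insert_mem {G S : Finset (Set X)} {a : Set X} (haG : a ∉ G) :
    atom (insert a G) (insert a S) = a ∩ atom G S := by
  classical
  have h1 : insert a G \ insert a S = G \ S := by
    rw [Finset.insert_sdiff_insert]
    ext U
    simp only [Finset.mem_sdiff, Finset.mem_insert]
    constructor
    · rintro ⟨hU, h2⟩; exact ⟨hU, fun h => h2 (Or.inr h)⟩
    · rintro ⟨hU, h2⟩
      refine ⟨hU, fun h => ?_⟩
      rcases h with h | h
      · exact haG (h ▸ hU)
      · exact h2 h
  rw [atom, h1, itr_insert, Set.inter_diff_assoc, atom]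

lemma mval_split (hL : IsLatt L) (hν : IsVal L ν) (hb : ν Set.univ < ⊤)
    {G S : Finset (Set X)} {a : Set X} (hG : ↑G ⊆ L) (ha : a ∈ L) (haG : a ∉ G)
    (hSG : S ⊆ G) :
    mval ν (insert a G) S + mval ν (insert a G) (insert a S) = mval ν G S := by
  classical
  have haS : a ∉ S := fun h => haG (hSG h)
  set A := itr S with hA
  set u := unn (G \ S) with hu
  set B := A ∩ u with hB
  set W := A ∩ a with hW
  have hSL : ↑S ⊆ L := fun U hU => hG (hSG hU)
  have hAL : A ∈ L := itr_mem hL hSL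
  have huL : u ∈ L := unn_mem hL (fun U hU => hG (by simpa using (Finset.mem_sdiff.1 hU).1))
  have hBL : B ∈ L := hL.2.2.2 A hAL u huL
  have hWL : W ∈ L := hL.2.2.2 A hAL a ha
  have hWBu : W ∪ B ∈ L := hL.2.2.1 W hWL B hBL
  have hWBi : W ∩ B ∈ L := hL.2.2.2 W hWL B hBL
  -- rewrite the three mvals
  have e1 : mval ν (insert a G) S = ν A - ν (W ∪ B) := by
    rw [mval, Finset.insert_sdiff_of_notMem _ haS, unn_insert, ← hA, ← hu,
      Set.inter_union_distrib_left, ← hW, ← hB]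
  have e2 : mval ν (insert a G) (insert a S) = ν W - ν (W ∩ B) := by
    have h1 : insert a G \ insert a S = G \ S := by
      rw [Finset.insert_sdiff_insert]
      ext U
      simp only [Finset.mem_sdiff, Finset.mem_insert]
      constructor
      · rintro ⟨hU, h2⟩; exact ⟨hU, fun h => h2 (Or.inr h)⟩
      · rintro ⟨hU, h2⟩
        refine ⟨hU, fun h => ?_⟩
        rcases h with h | h
        · exact haG (h ▸ hU)
        · exact h2 h
    have h2 : itr (insert a S) = W := by rw [itr_insert, ← hA, Set.inter_comm]
    have h3 : W ∩ u = W ∩ B := by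
      rw [hB, hW]; ext x; simp only [Set.mem_inter_iff]; tauto
    rw [mval, h1, h2, ← hu, h3]
  have e3 : mval ν G S = ν A - ν B := by rw [mval, ← hA, ← hu, ← hB]
  rw [e1, e2, e3]
  -- now pure ENNReal arithmetic
  have hmod : ν W + ν B = ν (W ∪ B) + ν (W ∩ B) := hν.2.2 W hWL B hBL
  have lWB_W : ν (W ∩ B) ≤ ν W := hν.2.1 _ hWBi _ hWL Set.inter_subset_left
  have lWB_A : ν (W ∪ B) ≤ ν A := hν.2.1 _ hWBu _ hAL
    (Set.union_subset Set.inter_subset_left Set.inter_subset_left)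
  have lB_A : ν B ≤ ν A := hν.2.1 _ hBL _ hAL Set.inter_subset_left
  have fWB : ν (W ∪ B) + ν (W ∩ B) ≠ ⊤ :=
    ENNReal.add_ne_top.2 ⟨val_ne_top hL hν hb hWBu, val_ne_top hL hν hb hWBi⟩
  have key : (ν A - ν (W ∪ B) + (ν W - ν (W ∩ B))) + (ν (W ∪ B) + ν (W ∩ B))
      = (ν A - ν B) + (ν (W ∪ B) + ν (W ∩ B)) := by
    have l1 : (ν A - ν (W ∪ B) + (ν W - ν (W ∩ B))) + (ν (W ∪ B) + ν (W ∩ B))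
        = (ν A - ν (W ∪ B) + ν (W ∪ B)) + ((ν W - ν (W ∩ B)) + ν (W ∩ B)) := by ring
    have l2 : (ν A - ν B) + (ν (W ∪ B) + ν (W ∩ B)) = (ν A - ν B + ν B) + ν W := by
      rw [← hmod]; ring
    rw [l1, l2, tsub_add_cancel_of_le lWB_A, tsub_add_cancel_of_le lWB_W,
      tsub_add_cancel_of_le lB_A]
  have key2 : (ν (W ∪ B) + ν (W ∩ B)) + (ν A - ν (W ∪ B) + (ν W - ν (W ∩ B)))
      = (ν (W ∪ B) + ν (W ∩ B)) + (ν A - ν B) := by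
    rw [add_comm, key, add_comm]
  exact (ENNReal.add_right_inj fWB).1 key2


lemma vsum_insert (hL : IsLatt L) (hν : IsVal L ν) (hb : ν Set.univ < ⊤)
    {G : Finset (Set X)} {a : Set X} {C : Set X} (hG : ↑G ⊆ L) (ha : a ∈ L) (haG : a ∉ G)
    (hC : Carved G C) :
    vsum ν (insert a G) C = vsum ν G C := by
  classical
  rw [vsum, Finset.sum_powerset_insert haG, ← Finset.sum_add_distrib]
  apply Finset.sum_congr rfl
  intro S hS
  have hSG : S ⊆ G := Finset.mem_powerset.1 hS
  have haS : a ∉ S := fun h => haG (hSG h)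
  have h1 : atom (insert a G) S = atom G S \ a := atom_insert_not_mem haG haS
  have h2 : atom (insert a G) (insert a S) = a ∩ atom G S := atom_insert_mem haG
  by_cases hsub : atom G S ⊆ C
  · rw [if_pos (h1 ▸ (Set.diff_subset.trans hsub)),
      if_pos (h2 ▸ (Set.inter_subset_right.trans hsub)), if_pos hsub]
    exact mval_split hL hν hb hG ha haG hSG
  · have hdis : ∀ x ∈ atom G S, x ∉ C := (atom_subset_or hC hSG).resolve_left hsub
    have z0 : ∀ T : Finset (Set X), atom (insert a G) T ⊆ atom G S →
        (if atom (insert a G) T ⊆ C then mval ν (insert a G) T else 0) = 0 := by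
      intro T hT
      split_ifs with h
      · apply mval_of_empty
        rw [Set.eq_empty_iff_forall_notMem]
        exact fun x hx => hdis x (hT hx) (h hx)
      · rfl
    rw [if_neg hsub, z0 S (h1 ▸ Set.diff_subset), z0 (insert a S) (h2 ▸ Set.inter_subset_right),
      add_zero]

lemma vsum_union (hL : IsLatt L) (hν : IsVal L ν) (hb : ν Set.univ < ⊤)
    {F : Finset (Set X)} {C : Set X} (hF : ↑F ⊆ L) (hC : Carved F C) :
    ∀ G : Finset (Set X), ↑G ⊆ L → vsum ν (F ∪ G) C = vsum ν F C := by
  classical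
  intro G
  induction G using Finset.induction_on with
  | empty => intro _; rw [Finset.union_empty]
  | @insert a G haG ih =>
    intro hG
    have ha : a ∈ L := hG (by simp)
    have hG' : ↑G ⊆ L := fun U hU => hG (by simp [hU])
    rw [Finset.union_insert]
    by_cases h : a ∈ F ∪ G
    · rw [Finset.insert_eq_self.2 h]; exact ih hG'
    · rw [vsum_insert hL hν hb (by
        push_cast
        exact Set.union_subset hF hG') ha h (hC.mono Finset.subset_union_left)]
      exact ih hG'

lemma vsum_eq_vsum (hL : IsLatt L) (hν : IsVal L ν) (hb : ν Set.univ < ⊤)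
    {F G : Finset (Set X)} {C : Set X} (hF : ↑F ⊆ L) (hG : ↑G ⊆ L)
    (hCF : Carved F C) (hCG : Carved G C) :
    vsum ν F C = vsum ν G C := by
  classical
  rw [← vsum_union hL hν hb hF hCF G hG, Finset.union_comm,
    vsum_union hL hν hb hG hCG F hF]


/-- carvable: representable over some finite subfamily of `L` -/
def Carvable (L : Set (Set X)) (C : Set X) : Prop :=
  ∃ F : Finset (Set X), ↑F ⊆ L ∧ Carved F C

lemma carvable_of_mem {U : Set X} (hU : U ∈ L) : Carvable L U :=
  ⟨{U}, by simpa using hU, carved_singleton U⟩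

lemma carvable_empty : Carvable L (∅ : Set X) := ⟨∅, by simp, carved_empty⟩

lemma Carvable.compl {C : Set X} (h : Carvable L C) : Carvable L Cᶜ := by
  obtain ⟨F, hF, hC⟩ := h; exact ⟨F, hF, hC.compl⟩

lemma Carvable.union {C D : Set X} (hC : Carvable L C) (hD : Carvable L D) :
    Carvable L (C ∪ D) := by
  classical
  obtain ⟨F, hF, hCF⟩ := hC
  obtain ⟨G, hG, hDG⟩ := hD
  exact ⟨F ∪ G, by push_cast; exact Set.union_subset hF hG,
    (hCF.mono Finset.subset_union_left).union (hDG.mono Finset.subset_union_right)⟩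

lemma carvable_of_genAlg {C : Set X} (hC : C ∈ genAlg L) : Carvable L C :=
  hC {C | Carvable L C}
    ⟨fun U hU => carvable_of_mem hU, carvable_empty,
      fun _ h => h.compl, fun _ h _ h' => h.union h'⟩

/-- both carvable sets admit a common carving family -/
lemma common_family {C D : Set X} (hC : Carvable L C) (hD : Carvable L D) :
    ∃ F : Finset (Set X), ↑F ⊆ L ∧ Carved F C ∧ Carved F D := by
  classical
  obtain ⟨F, hF, hCF⟩ := hC
  obtain ⟨G, hG, hDG⟩ := hD
  exact ⟨F ∪ G, by push_cast; exact Set.union_subset hF hG,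
    hCF.mono Finset.subset_union_left, hDG.mono Finset.subset_union_right⟩

/-- the extension of `ν` to the generated algebra -/
noncomputable def extVal (L : Set (Set X)) (ν : Set X → ℝ≥0∞) (C : Set X) : ℝ≥0∞ :=
  if h : Carvable L C then vsum ν h.choose C else 0

lemma extVal_eq (hL : IsLatt L) (hν : IsVal L ν) (hb : ν Set.univ < ⊤)
    {F : Finset (Set X)} {C : Set X} (hF : ↑F ⊆ L) (hC : Carved F C) :
    extVal L ν C = vsum ν F C := by
  have h : Carvable L C := ⟨F, hF, hC⟩
  rw [extVal, dif_pos h]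
  exact vsum_eq_vsum hL hν hb h.choose_spec.1 hF h.choose_spec.2 hC

lemma vsum_empty_set (F : Finset (Set X)) : vsum ν F (∅ : Set X) = 0 := by
  classical
  rw [vsum]
  apply Finset.sum_eq_zero
  intro S hS
  split_ifs with h
  · exact mval_of_empty (Set.subset_empty_iff.1 h)
  · rfl

lemma extVal_empty (hL : IsLatt L) (hν : IsVal L ν) (hb : ν Set.univ < ⊤) :
    extVal L ν (∅ : Set X) = 0 := by
  rw [extVal_eq hL hν hb (F := ∅) (by simp) carved_empty, vsum_empty_set]

lemma extVal_on_L (hL : IsLatt L) (hν : IsVal L ν) (hb : ν Set.univ < ⊤)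
    {U : Set X} (hU : U ∈ L) : extVal L ν U = ν U := by
  classical
  rw [extVal_eq hL hν hb (F := {U}) (by simpa using hU) (carved_singleton U)]
  show vsum ν (insert U ∅) U = ν U
  rw [vsum, Finset.sum_powerset_insert (Finset.notMem_empty U), Finset.powerset_empty,
    Finset.sum_singleton, Finset.sum_singleton]
  have h2 : atom (insert U ∅) (insert U (∅ : Finset (Set X))) = U := by
    simp [atom, itr, unn]
  have h3 : mval ν (insert U ∅) (insert U (∅ : Finset (Set X))) = ν U := by
    rw [mval]
    simp only [Finset.sdiff_self]
    have e : itr (insert U (∅ : Finset (Set X))) ∩ unn (∅ : Finset (Set X)) = ∅ := by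
      simp [unn]
    rw [e, hν.1, tsub_zero]
    simp [itr]
  have h4 : (if atom (insert U ∅) (∅ : Finset (Set X)) ⊆ U
      then mval ν (insert U ∅) (∅ : Finset (Set X)) else 0) = 0 := by
    split_ifs with h
    · apply mval_of_empty
      have h5 : atom (insert U ∅) (∅ : Finset (Set X)) = Uᶜ := by
        simp [atom, itr, unn, Set.compl_eq_univ_diff]
      rw [h5] at h ⊢
      rw [Set.eq_empty_iff_forall_notMem]
      exact fun x hx => hx (h hx)
    · rfl
  rw [h4, if_pos (by rw [h2]), h3, zero_add]

lemma extVal_mono (hL : IsLatt L) (hν : IsVal L ν) (hb : ν Set.univ < ⊤)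
    {C D : Set X} (hC : Carvable L C) (hD : Carvable L D) (hCD : C ⊆ D) :
    extVal L ν C ≤ extVal L ν D := by
  classical
  obtain ⟨F, hF, h1, h2⟩ := common_family hC hD
  rw [extVal_eq hL hν hb hF h1, extVal_eq hL hν hb hF h2, vsum, vsum]
  apply Finset.sum_le_sum
  intro S hS
  split_ifs with hc hd hd
  · exact le_refl _
  · exact absurd (hc.trans hCD) hd
  · exact zero_le
  · exact le_refl _

lemma extVal_modular (hL : IsLatt L) (hν : IsVal L ν) (hb : ν Set.univ < ⊤)
    {C D : Set X} (hC : Carvable L C) (hD : Carvable L D) :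
    extVal L ν C + extVal L ν D = extVal L ν (C ∪ D) + extVal L ν (C ∩ D) := by
  classical
  obtain ⟨F, hF, h1, h2⟩ := common_family hC hD
  rw [extVal_eq hL hν hb hF h1, extVal_eq hL hν hb hF h2,
    extVal_eq hL hν hb hF (h1.union h2), extVal_eq hL hν hb hF (h1.inter h2),
    vsum, vsum, vsum, vsum, ← Finset.sum_add_distrib, ← Finset.sum_add_distrib]
  apply Finset.sum_congr rfl
  intro S hS
  have hSF : S ⊆ F := Finset.mem_powerset.1 hS
  by_cases hemp : atom F S = ∅
  · have hm : mval ν F S = 0 := mval_of_empty hemp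
    simp [hm]
  · obtain ⟨x₀, hx₀⟩ := Set.nonempty_iff_ne_empty.2 hemp
    by_cases hc : atom F S ⊆ C <;> by_cases hd : atom F S ⊆ D
    · rw [if_pos hc, if_pos hd, if_pos (hc.trans Set.subset_union_left),
        if_pos (Set.subset_inter hc hd)]
    · rw [if_pos hc, if_neg hd, if_pos (hc.trans Set.subset_union_left),
        if_neg (fun h => hd (h.trans Set.inter_subset_right))]
    · rw [if_neg hc, if_pos hd, if_pos (hd.trans Set.subset_union_right),
        if_neg (fun h => hc (h.trans Set.inter_subset_left))]
      rw [zero_add, add_zero]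
    · have hc' : ∀ x ∈ atom F S, x ∉ C := (atom_subset_or h1 hSF).resolve_left hc
      have hd' : ∀ x ∈ atom F S, x ∉ D := (atom_subset_or h2 hSF).resolve_left hd
      rw [if_neg hc, if_neg hd, if_neg (fun h => ?_),
        if_neg (fun h => hc (h.trans Set.inter_subset_left))]
      rcases h hx₀ with h' | h'
      · exact hc' x₀ hx₀ h'
      · exact hd' x₀ hx₀ h'


-- genAlg closure lemmas
lemma genAlg_le : L ⊆ genAlg L := fun _ hU _ hA => hA.1 hU
lemma genAlg_empty : (∅ : Set X) ∈ genAlg L := fun _ hA => hA.2.1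
lemma genAlg_compl {C : Set X} (h : C ∈ genAlg L) : Cᶜ ∈ genAlg L :=
  fun A hA => hA.2.2.1 _ (h A hA)
lemma genAlg_union {C D : Set X} (hC : C ∈ genAlg L) (hD : D ∈ genAlg L) :
    C ∪ D ∈ genAlg L := fun A hA => hA.2.2.2 _ (hC A hA) _ (hD A hA)
lemma genAlg_univ : (Set.univ : Set X) ∈ genAlg L := by
  have := genAlg_compl (L := L) genAlg_empty
  rwa [Set.compl_empty] at this
lemma genAlg_inter {C D : Set X} (hC : C ∈ genAlg L) (hD : D ∈ genAlg L) :
    C ∩ D ∈ genAlg L := by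
  have h := genAlg_compl (genAlg_union (genAlg_compl hC) (genAlg_compl hD))
  rwa [Set.compl_union, compl_compl, compl_compl] at h
lemma genAlg_diff {C D : Set X} (hC : C ∈ genAlg L) (hD : D ∈ genAlg L) :
    C \ D ∈ genAlg L := genAlg_inter hC (genAlg_compl hD)

lemma atom_mem_genAlg (hL : IsLatt L) {F S : Finset (Set X)} (hF : ↑F ⊆ L) (hS : S ⊆ F) :
    atom F S ∈ genAlg L := by
  apply genAlg_diff
  · exact genAlg_le (itr_mem hL (fun U hU => hF (hS hU)))
  · exact genAlg_le (unn_mem hL (fun U hU => hF (by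
      simp only [Finset.coe_sdiff, Set.mem_diff] at hU
      exact hU.1)))

-- additivity of a valuation on the generated algebra
lemma val_additive (hμ : IsVal (genAlg L) μ) {P Q : Set X} (hP : P ∈ genAlg L)
    (hQ : Q ∈ genAlg L) (hPQ : P ∩ Q = ∅) : μ (P ∪ Q) = μ P + μ Q := by
  have h := hμ.2.2 P hP Q hQ
  rw [hPQ, hμ.1, add_zero] at h
  exact h.symm

lemma genAlg_biUnion {ι : Type*} (T : Finset ι) (f : ι → Set X)
    (hf : ∀ i ∈ T, f i ∈ genAlg L) : (⋃ i ∈ T, f i) ∈ genAlg L := by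
  classical
  induction T using Finset.induction_on with
  | empty => simpa using genAlg_empty
  | @insert a T ha ih =>
    rw [Finset.set_biUnion_insert]
    exact genAlg_union (hf a (by simp)) (ih (fun i hi => hf i (by simp [hi])))

/-- value of any extending valuation on an atom -/
lemma val_atom (hL : IsLatt L) (hν : IsVal L ν) (hb : ν Set.univ < ⊤)
    (hμ : IsVal (genAlg L) μ) (hext : ∀ U ∈ L, μ U = ν U)
    {F S : Finset (Set X)} (hF : ↑F ⊆ L) (hS : S ⊆ F) :
    μ (atom F S) = mval ν F S := by
  classical
  set A := itr S with hA
  set u := unn (F \ S) with hu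
  have hAL : A ∈ L := itr_mem hL (fun U hU => hF (hS hU))
  have huL : u ∈ L := unn_mem hL (fun U hU => hF (by
    simp only [Finset.coe_sdiff, Set.mem_diff] at hU
    exact hU.1))
  have hBL : A ∩ u ∈ L := hL.2.2.2 A hAL u huL
  have hatom : atom F S = A \ (A ∩ u) := by rw [atom, ← hA, ← hu, Set.diff_self_inter]
  have hdisj : atom F S ∩ (A ∩ u) = ∅ := by
    rw [hatom]
    rw [Set.eq_empty_iff_forall_notMem]
    rintro x ⟨⟨_, h2⟩, h3⟩
    exact h2 h3
  have hunion : atom F S ∪ (A ∩ u) = A := by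
    rw [hatom, Set.diff_union_of_subset Set.inter_subset_left]
  have hadd := val_additive hμ (atom_mem_genAlg hL hF hS) (genAlg_le hBL) hdisj
  rw [hunion] at hadd
  rw [hext A hAL, hext (A ∩ u) hBL] at hadd
  rw [mval, ← hA, ← hu]
  exact ENNReal.eq_sub_of_add_eq (val_ne_top hL hν hb hBL) hadd.symm

/-- any extending valuation agrees with `vsum` -/
lemma val_eq_vsum (hL : IsLatt L) (hν : IsVal L ν) (hb : ν Set.univ < ⊤)
    (hμ : IsVal (genAlg L) μ) (hext : ∀ U ∈ L, μ U = ν U)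
    {F : Finset (Set X)} {C : Set X} (hF : ↑F ⊆ L) (hC : Carved F C) :
    μ C = vsum ν F C := by
  classical
  set T : Finset (Finset (Set X)) := F.powerset.filter (fun S => atom F S ⊆ C) with hT
  have hCT : C = ⋃ S ∈ T, atom F S := by
    apply Set.eq_of_subset_of_subset
    · intro x hx
      obtain ⟨S, hSF, hxS, hsub⟩ := exists_atom hC hx
      exact Set.mem_biUnion (Finset.mem_filter.2 ⟨Finset.mem_powerset.2 hSF, hsub⟩) hxS
    · intro x hx
      obtain ⟨S, hS, hxS⟩ := Set.mem_iUnion₂.1 hx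
      exact (Finset.mem_filter.1 hS).2 hxS
  -- μ of a disjoint union of atoms is the sum of the μ's
  have key : ∀ T' : Finset (Finset (Set X)), T' ⊆ F.powerset →
      μ (⋃ S ∈ T', atom F S) = ∑ S ∈ T', μ (atom F S) := by
    intro T'
    induction T' using Finset.induction_on with
    | empty => intro _; simpa using hμ.1
    | @insert S₀ T' hS₀ ih =>
      intro hsub
      have hS₀F : S₀ ⊆ F := Finset.mem_powerset.1 (hsub (by simp))
      have hsub' : T' ⊆ F.powerset := fun S hS => hsub (by simp [hS])
      rw [Finset.set_biUnion_insert, Finset.sum_insert hS₀]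
      rw [← ih hsub']
      apply val_additive hμ (atom_mem_genAlg hL hF hS₀F)
        (genAlg_biUnion T' _ (fun S hS => atom_mem_genAlg hL hF
          (Finset.mem_powerset.1 (hsub' hS))))
      rw [Set.eq_empty_iff_forall_notMem]
      rintro x ⟨hx1, hx2⟩
      obtain ⟨S, hS, hxS⟩ := Set.mem_iUnion₂.1 hx2
      exact hS₀ (atom_eq_of_mem hS₀F (Finset.mem_powerset.1 (hsub' hS)) hx1 hxS ▸ hS)
  have hμC : μ C = ∑ S ∈ T, μ (atom F S) := by
    rw [hCT]; exact key T (Finset.filter_subset _ _)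
  have heq : ∀ S ∈ T, μ (atom F S) = mval ν F S := fun S hS =>
    val_atom hL hν hb hμ hext hF (Finset.mem_powerset.1 (Finset.mem_filter.1 hS).1)
  rw [hμC, Finset.sum_congr rfl heq, vsum, hT, Finset.sum_filter]


end SHT
end SHTaux

/-- Smiley–Horn–Tarski: every bounded valuation on `(X, L)` extends to a
unique valuation on `(X, A(L))`. -/
theorem stmt16 (L : Set (Set X)) (hL : IsLatt L) (ν : Set X → ℝ≥0∞) (hν : IsVal L ν)
    (hb : ν Set.univ < ⊤) :
    (∃ ν' : Set X → ℝ≥0∞, (∀ U ∈ L, ν' U = ν U) ∧ IsVal (genAlg L) ν') ∧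
      ∀ ν₁ ν₂ : Set X → ℝ≥0∞,
        (∀ U ∈ L, ν₁ U = ν U) → IsVal (genAlg L) ν₁ →
        (∀ U ∈ L, ν₂ U = ν U) → IsVal (genAlg L) ν₂ →
        ∀ C ∈ genAlg L, ν₁ C = ν₂ C := by
  constructor
  · refine ⟨SHT.extVal L ν, fun U hU => SHT.extVal_on_L hL hν hb hU,
      SHT.extVal_empty hL hν hb, ?_, ?_⟩
    · intro C hC D hD hCD
      exact SHT.extVal_mono hL hν hb (SHT.carvable_of_genAlg hC)
        (SHT.carvable_of_genAlg hD) hCD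
    · intro C hC D hD
      exact SHT.extVal_modular hL hν hb (SHT.carvable_of_genAlg hC)
        (SHT.carvable_of_genAlg hD)
  · intro ν₁ ν₂ h₁ hv₁ h₂ hv₂ C hC
    obtain ⟨F, hF, hCF⟩ := SHT.carvable_of_genAlg hC
    rw [SHT.val_eq_vsum hL hν hb hv₁ h₁ hF hCF, SHT.val_eq_vsum hL hν hb hv₂ h₂ hF hCF]
end

section
/- Let (X, L) be a Pervin space, μ and ν bounded valuations on (X, L) with ν = g·μ for some g ∈ 𝓛(X, L). Then for every r ≥ 0, the signed valuation ν − r·μ has the Hahn decomposition property, with witness U := g⁻¹((r,∞]): ν(C) ≥ r·μ(C) for every crescent C ⊆ U, and ν(C) ≤ r·μ(C) for every crescent C disjoint from U. -/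
open scoped ENNReal NNReal

variable {X : Type*}

section Aux

variable {X : Type*}

lemma genAlg_self' {L : Set (Set X)} {U : Set X} (hU : U ∈ L) : U ∈ genAlg L :=
  fun _ hA => hA.1 hU

lemma genAlg_compl' {L : Set (Set X)} {S : Set X} (hS : S ∈ genAlg L) : Sᶜ ∈ genAlg L :=
  fun A hA => hA.2.2.1 S (hS A hA)

lemma genAlg_union' {L : Set (Set X)} {S T : Set X} (hS : S ∈ genAlg L) (hT : T ∈ genAlg L) :
    S ∪ T ∈ genAlg L :=
  fun A hA => hA.2.2.2 S (hS A hA) T (hT A hA)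

lemma genAlg_inter' {L : Set (Set X)} {S T : Set X} (hS : S ∈ genAlg L) (hT : T ∈ genAlg L) :
    S ∩ T ∈ genAlg L := by
  have : S ∩ T = (Sᶜ ∪ Tᶜ)ᶜ := by rw [Set.compl_union, compl_compl, compl_compl]
  rw [this]
  exact genAlg_compl' (genAlg_union' (genAlg_compl' hS) (genAlg_compl' hT))

open MeasureTheory in
/-- The key integral inequalities. -/
lemma key_ineq {L : Set (Set X)} (hL : IsLatt L) {μ : Set X → ℝ≥0∞} (hμ : IsVal L μ)
    {g : X → ℝ≥0∞} (hg : MemL L g) (r : ℝ≥0) {U V : Set X} (hU : U ∈ L) (hV : V ∈ L)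
    (hVU : V ⊆ U) :
    ((U \ V ⊆ {x | (r : ℝ≥0∞) < g x}) →
      (r : ℝ≥0∞) * μ U + densF g μ V ≤ densF g μ U + (r : ℝ≥0∞) * μ V) ∧
    ((U \ V) ∩ {x | (r : ℝ≥0∞) < g x} = ∅ →
      densF g μ U + (r : ℝ≥0∞) * μ V ≤ (r : ℝ≥0∞) * μ U + densF g μ V) := by
  set A : ℝ → ℝ≥0∞ := fun t => μ (U ∩ {x | ((t.toNNReal : ℝ≥0) : ℝ≥0∞) < g x}) with hA
  set B : ℝ → ℝ≥0∞ := fun t => μ (V ∩ {x | ((t.toNNReal : ℝ≥0) : ℝ≥0∞) < g x}) with hB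
  have hSmem : ∀ t : ℝ, U ∩ {x | ((t.toNNReal : ℝ≥0) : ℝ≥0∞) < g x} ∈ L :=
    fun t => hL.2.2.2 U hU _ (hg t.toNNReal)
  have hSsub : ∀ t : ℝ, U ∩ {x | ((t.toNNReal : ℝ≥0) : ℝ≥0∞) < g x} ⊆ U :=
    fun t => Set.inter_subset_left
  have hSVmem : ∀ t : ℝ, V ∩ {x | ((t.toNNReal : ℝ≥0) : ℝ≥0∞) < g x} ∈ L :=
    fun t => hL.2.2.2 V hV _ (hg t.toNNReal)
  -- splitting of the integrals
  have hsplit : ∀ f : ℝ → ℝ≥0∞,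
      (∫⁻ t in Set.Ioi (0 : ℝ), f t) =
        (∫⁻ t in Set.Ioc (0 : ℝ) (r : ℝ), f t) + ∫⁻ t in Set.Ioi (r : ℝ), f t := by
    intro f
    rw [← Set.Ioc_union_Ioi_eq_Ioi (show (0 : ℝ) ≤ (r : ℝ) from r.coe_nonneg),
      lintegral_union measurableSet_Ioi Set.Ioc_disjoint_Ioi_same]
  have hdU : densF g μ U =
      (∫⁻ t in Set.Ioc (0 : ℝ) (r : ℝ), A t) + ∫⁻ t in Set.Ioi (r : ℝ), A t := hsplit A
  have hdV : densF g μ V =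
      (∫⁻ t in Set.Ioc (0 : ℝ) (r : ℝ), B t) + ∫⁻ t in Set.Ioi (r : ℝ), B t := hsplit B
  have hconst : ∀ c : ℝ≥0∞, (∫⁻ _ in Set.Ioc (0 : ℝ) (r : ℝ), c) = c * r := by
    intro c
    rw [setLIntegral_const, Real.volume_Ioc, sub_zero, ENNReal.ofReal_coe_nnreal]
  -- inter identity
  have hinter : ∀ t : ℝ,
      (U ∩ {x | ((t.toNNReal : ℝ≥0) : ℝ≥0∞) < g x}) ∩ V
        = V ∩ {x | ((t.toNNReal : ℝ≥0) : ℝ≥0∞) < g x} := by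
    intro t
    ext x
    constructor
    · rintro ⟨⟨_, hx2⟩, hx3⟩; exact ⟨hx3, hx2⟩
    · rintro ⟨hx1, hx2⟩; exact ⟨⟨hVU hx1, hx2⟩, hx1⟩
  have hmod : ∀ t : ℝ, A t + μ V =
      μ ((U ∩ {x | ((t.toNNReal : ℝ≥0) : ℝ≥0∞) < g x}) ∪ V) + B t := by
    intro t
    have := hμ.2.2 _ (hSmem t) V hV
    rw [hinter t] at this
    exact this
  have htNN : ∀ t : ℝ, t ∈ Set.Ioc (0 : ℝ) (r : ℝ) → (t.toNNReal : ℝ≥0) ≤ r := by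
    intro t ht
    have := Real.toNNReal_mono ht.2
    rwa [Real.toNNReal_coe] at this
  have hBleA : ∀ t : ℝ, B t ≤ A t := by
    intro t
    exact hμ.2.1 _ (hSVmem t) _ (hSmem t)
      (Set.inter_subset_inter_left _ hVU)
  constructor
  · -- case (a): U \ V ⊆ {g > r}
    intro hsub
    -- head equality: for t ≤ r, the union is all of U
    have hunion : ∀ t : ℝ, t ∈ Set.Ioc (0 : ℝ) (r : ℝ) →
        (U ∩ {x | ((t.toNNReal : ℝ≥0) : ℝ≥0∞) < g x}) ∪ V = U := by
      intro t ht
      apply Set.Subset.antisymm (Set.union_subset (hSsub t) hVU)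
      intro x hx
      by_cases hxV : x ∈ V
      · exact Or.inr hxV
      · refine Or.inl ⟨hx, ?_⟩
        have hgr : (r : ℝ≥0∞) < g x := hsub ⟨hx, hxV⟩
        exact lt_of_le_of_lt (ENNReal.coe_le_coe.2 (htNN t ht)) hgr
    have hhead : ∀ t : ℝ, t ∈ Set.Ioc (0 : ℝ) (r : ℝ) → μ U + B t = A t + μ V := by
      intro t ht
      rw [hmod t, hunion t ht]
    have h1 : (r : ℝ≥0∞) * μ U + (∫⁻ t in Set.Ioc (0 : ℝ) (r : ℝ), B t)
        = (∫⁻ t in Set.Ioc (0 : ℝ) (r : ℝ), A t) + (r : ℝ≥0∞) * μ V := by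
      rw [mul_comm ((r : ℝ≥0∞)) (μ U), ← hconst (μ U),
        ← lintegral_add_left measurable_const,
        setLIntegral_congr_fun measurableSet_Ioc
          hhead,
        lintegral_add_right _ measurable_const, hconst (μ V), mul_comm]
    have h2 : (∫⁻ t in Set.Ioi (r : ℝ), B t) ≤ ∫⁻ t in Set.Ioi (r : ℝ), A t :=
      lintegral_mono fun t => hBleA t
    calc (r : ℝ≥0∞) * μ U + densF g μ V
        = ((r : ℝ≥0∞) * μ U + (∫⁻ t in Set.Ioc (0 : ℝ) (r : ℝ), B t))
            + ∫⁻ t in Set.Ioi (r : ℝ), B t := by rw [hdV]; ring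
      _ = ((∫⁻ t in Set.Ioc (0 : ℝ) (r : ℝ), A t) + (r : ℝ≥0∞) * μ V)
            + ∫⁻ t in Set.Ioi (r : ℝ), B t := by rw [h1]
      _ ≤ ((∫⁻ t in Set.Ioc (0 : ℝ) (r : ℝ), A t) + (r : ℝ≥0∞) * μ V)
            + ∫⁻ t in Set.Ioi (r : ℝ), A t := by exact add_le_add_right h2 _
      _ = densF g μ U + (r : ℝ≥0∞) * μ V := by rw [hdU]; ring
  · -- case (b): (U \ V) ∩ {g > r} = ∅
    intro hdisj
    have hUsub : ∀ x, x ∈ U → (r : ℝ≥0∞) < g x → x ∈ V := by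
      intro x hxU hxg
      by_contra hxV
      have hx : x ∈ (U \ V) ∩ {x | (r : ℝ≥0∞) < g x} := ⟨⟨hxU, hxV⟩, hxg⟩
      rw [hdisj] at hx
      exact hx
    have hhead : ∀ t : ℝ, t ∈ Set.Ioc (0 : ℝ) (r : ℝ) → A t + μ V ≤ μ U + B t := by
      intro t ht
      rw [hmod t]
      refine add_le_add_left ?_ _
      exact hμ.2.1 _ (hL.2.2.1 _ (hSmem t) _ hV) _ hU (Set.union_subset (hSsub t) hVU)
    have htail : ∀ t : ℝ, t ∈ Set.Ioi (r : ℝ) → A t = B t := by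
      intro t ht
      have hrt : (r : ℝ≥0) ≤ t.toNNReal := by
        have := Real.toNNReal_mono (le_of_lt ht)
        rwa [Real.toNNReal_coe] at this
      refine congrArg μ ?_
      apply Set.Subset.antisymm
      · rintro x ⟨hxU, hxg⟩
        refine ⟨hUsub x hxU ?_, hxg⟩
        exact lt_of_le_of_lt (ENNReal.coe_le_coe.2 hrt) hxg
      · exact Set.inter_subset_inter_left _ hVU
    have h1 : (∫⁻ t in Set.Ioc (0 : ℝ) (r : ℝ), A t) + (r : ℝ≥0∞) * μ V
        ≤ (r : ℝ≥0∞) * μ U + (∫⁻ t in Set.Ioc (0 : ℝ) (r : ℝ), B t) := by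
      rw [mul_comm ((r : ℝ≥0∞)) (μ V), ← hconst (μ V),
        ← lintegral_add_right _ measurable_const,
        mul_comm ((r : ℝ≥0∞)) (μ U), ← hconst (μ U),
        ← lintegral_add_left measurable_const]
      exact setLIntegral_mono' measurableSet_Ioc hhead
    have h2 : (∫⁻ t in Set.Ioi (r : ℝ), A t) = ∫⁻ t in Set.Ioi (r : ℝ), B t :=
      setLIntegral_congr_fun measurableSet_Ioi htail
    calc densF g μ U + (r : ℝ≥0∞) * μ V
        = ((∫⁻ t in Set.Ioc (0 : ℝ) (r : ℝ), A t) + (r : ℝ≥0∞) * μ V)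
            + ∫⁻ t in Set.Ioi (r : ℝ), A t := by rw [hdU]; ring
      _ ≤ ((r : ℝ≥0∞) * μ U + (∫⁻ t in Set.Ioc (0 : ℝ) (r : ℝ), B t))
            + ∫⁻ t in Set.Ioi (r : ℝ), A t := by exact add_le_add_left h1 _
      _ = ((r : ℝ≥0∞) * μ U + (∫⁻ t in Set.Ioc (0 : ℝ) (r : ℝ), B t))
            + ∫⁻ t in Set.Ioi (r : ℝ), B t := by rw [h2]
      _ = (r : ℝ≥0∞) * μ U + densF g μ V := by rw [hdV]; ring

end Aux


lemma ext_val_eq {X : Type*} {L : Set (Set X)} (hL : IsLatt L) {κ' κ : Set X → ℝ≥0∞}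
    (hκ' : IsVal (genAlg L) κ') (hκ'e : ∀ U ∈ L, κ' U = κ U)
    {U V : Set X} (hU : U ∈ L) (hV : V ∈ L) :
    κ' (U \ V) + κ (U ∩ V) = κ U := by
  have hW : U ∩ V ∈ L := hL.2.2.2 U hU V hV
  have hCmem : U \ V ∈ genAlg L := by
    rw [Set.diff_eq]
    exact genAlg_inter' (genAlg_self' hU) (genAlg_compl' (genAlg_self' hV))
  have hmod := hκ'.2.2 _ hCmem _ (genAlg_self' hW)
  have hun : (U \ V) ∪ (U ∩ V) = U := Set.diff_union_inter U V
  have hin : (U \ V) ∩ (U ∩ V) = ∅ := by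
    ext x
    simp only [Set.mem_inter_iff, Set.mem_diff, Set.mem_empty_iff_false, iff_false]
    tauto
  rw [hun, hin, hκ'.1, add_zero, hκ'e U hU, hκ'e (U ∩ V) hW] at hmod
  exact hmod

/-- if `ν = g·μ` for bounded valuations, then for every `r ≥ 0` the signed
valuation `ν − r·μ` has the Hahn decomposition property with witness `g⁻¹((r,∞])`:
`ν(C) ≥ r·μ(C)` on crescents inside the witness, `ν(C) ≤ r·μ(C)` on crescents disjoint
from it, where crescent values are given by the unique extensions to `A(L)`. -/
theorem stmt17 (L : Set (Set X)) (hL : IsLatt L) (μ ν : Set X → ℝ≥0∞)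
    (hμ : IsVal L μ) (hν : IsVal L ν)
    (hμb : μ Set.univ < ⊤) (hνb : ν Set.univ < ⊤)
    (g : X → ℝ≥0∞) (hg : MemL L g) (heq : ∀ U ∈ L, ν U = densF g μ U) (r : ℝ≥0)
    (ν' μ' : Set X → ℝ≥0∞)
    (hν' : IsVal (genAlg L) ν') (hν'e : ∀ U ∈ L, ν' U = ν U)
    (hμ' : IsVal (genAlg L) μ') (hμ'e : ∀ U ∈ L, μ' U = μ U) :
    (∀ C : Set X, IsCrescent L C → C ⊆ {x | (r : ℝ≥0∞) < g x} →
        (r : ℝ≥0∞) * μ' C ≤ ν' C) ∧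
      (∀ C : Set X, IsCrescent L C → Disjoint C {x | (r : ℝ≥0∞) < g x} →
        ν' C ≤ (r : ℝ≥0∞) * μ' C) := by
  have hfinν : ∀ W ∈ L, ν W ≠ ⊤ := fun W hW =>
    (lt_of_le_of_lt (hν.2.1 W hW _ hL.2.1 (Set.subset_univ W)) hνb).ne
  have hfinμ : ∀ W ∈ L, μ W ≠ ⊤ := fun W hW =>
    (lt_of_le_of_lt (hμ.2.1 W hW _ hL.2.1 (Set.subset_univ W)) hμb).ne
  constructor
  · intro C hC hsub
    obtain ⟨U, hU, V, hV, rfl⟩ := hC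
    set W := U ∩ V with hWdef
    have hW : W ∈ L := hL.2.2.2 U hU V hV
    have hWU : W ⊆ U := Set.inter_subset_left
    have hdiff : U \ V = U \ W := Set.diff_self_inter.symm
    have hνeq : ν' (U \ V) + ν W = ν U := ext_val_eq hL hν' hν'e hU hV
    have hμeq : μ' (U \ V) + μ W = μ U := ext_val_eq hL hμ' hμ'e hU hV
    have key := (key_ineq hL hμ hg r hU hW hWU).1 (by rw [← hdiff]; exact hsub)
    rw [← heq U hU, ← heq W hW] at key
    have hc : (r : ℝ≥0∞) * μ W + ν W ≠ ⊤ :=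
      ENNReal.add_ne_top.2 ⟨ENNReal.mul_ne_top ENNReal.coe_ne_top (hfinμ W hW), hfinν W hW⟩
    have h1 : (r : ℝ≥0∞) * μ' (U \ V) + ((r : ℝ≥0∞) * μ W + ν W)
        = (r : ℝ≥0∞) * μ U + ν W := by rw [← hμeq]; ring
    have h2 : ν' (U \ V) + ((r : ℝ≥0∞) * μ W + ν W)
        = ν U + (r : ℝ≥0∞) * μ W := by rw [← hνeq]; ring
    exact (ENNReal.add_le_add_iff_right hc).1 (by rw [h1, h2]; exact key)
  · intro C hC hdisj
    obtain ⟨U, hU, V, hV, rfl⟩ := hC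
    set W := U ∩ V with hWdef
    have hW : W ∈ L := hL.2.2.2 U hU V hV
    have hWU : W ⊆ U := Set.inter_subset_left
    have hdiff : U \ V = U \ W := Set.diff_self_inter.symm
    have hνeq : ν' (U \ V) + ν W = ν U := ext_val_eq hL hν' hν'e hU hV
    have hμeq : μ' (U \ V) + μ W = μ U := ext_val_eq hL hμ' hμ'e hU hV
    have hempty : (U \ W) ∩ {x | (r : ℝ≥0∞) < g x} = ∅ := by
      rw [← hdiff]
      exact Set.disjoint_iff_inter_eq_empty.1 hdisj
    have key := (key_ineq hL hμ hg r hU hW hWU).2 hempty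
    rw [← heq U hU, ← heq W hW] at key
    have hc : (r : ℝ≥0∞) * μ W + ν W ≠ ⊤ :=
      ENNReal.add_ne_top.2 ⟨ENNReal.mul_ne_top ENNReal.coe_ne_top (hfinμ W hW), hfinν W hW⟩
    have h1 : (r : ℝ≥0∞) * μ' (U \ V) + ((r : ℝ≥0∞) * μ W + ν W)
        = (r : ℝ≥0∞) * μ U + ν W := by rw [← hμeq]; ring
    have h2 : ν' (U \ V) + ((r : ℝ≥0∞) * μ W + ν W)
        = ν U + (r : ℝ≥0∞) * μ W := by rw [← hνeq]; ring
    exact (ENNReal.add_le_add_iff_right hc).1 (by rw [h2, h1]; exact key)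
end
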